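/- Let φ_α(D) = max_{q ∈ conv(Q)} [⟨q, P - D⟩ + αH(D)] be the regularized primal objective on Δ_k and ψ_α(q) = ⟨q, P⟩ - αH*(q/α) the dual objective on conv(Q), where Q ⊆ [-1,1]^k, α > 0, and H is the negative entropy with Fenchel conjugate H* = log-sum-exp. For any q_out ∈ conv(Q), set P_priv := ∇H*(q_out/α). Then φ_α(P_priv) - ψ_α(q_out) = ⟨q̃ - q_out, ∇ψ_α(q_out)⟩ ≤ max_{q ∈ conv(Q)} ⟨q - q_out, ∇ψ_α(q_out)⟩, where q̃ = argmax_{q ∈ conv(Q)} [⟨q, P - P_priv⟩] and ∇ψ_α(q) = P - ∇H*(q/α). -/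
import Mathlib


theorem stmt_19 {k : ℕ} (hk : 0 < k) (α : ℝ) (hα : 0 < α)
    (Q : Set (Fin k → ℝ)) (hQne : Q.Nonempty) (hQcomp : IsCompact Q)
    (hQbdd : ∀ q ∈ Q, ∀ i, |q i| ≤ 1)
    (P : Fin k → ℝ) (hP : P ∈ stdSimplex ℝ (Fin k))
    (qout : Fin k → ℝ) (hqout : qout ∈ convexHull ℝ Q)
    (Ppriv : Fin k → ℝ)
    (hPpriv : Ppriv = fun i => Real.exp (qout i / α) / ∑ j, Real.exp (qout j / α))
    (H φα ψα : (Fin k → ℝ) → ℝ)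
    (hH : H = fun D => ∑ i, D i * Real.log (D i))
    (hφα : φα = fun D => sSup ((fun q => ∑ i, q i * (P i - D i)) '' convexHull ℝ Q) + α * H D)
    (hψα : ψα = fun q => (∑ i, q i * P i) - α * Real.log (∑ j, Real.exp (q j / α)))
    (qtilde : Fin k → ℝ) (hqt : qtilde ∈ convexHull ℝ Q)
    (hqtmax : ∀ q ∈ convexHull ℝ Q,
      (∑ i, q i * (P i - Ppriv i)) ≤ ∑ i, qtilde i * (P i - Ppriv i)) :
    φα Ppriv - ψα qout = (∑ i, (qtilde i - qout i) * (P i - Ppriv i)) ∧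
      φα Ppriv - ψα qout ≤
        sSup ((fun q => ∑ i, (q i - qout i) * (P i - Ppriv i)) '' convexHull ℝ Q) := by
  set Z : ℝ := ∑ j, Real.exp (qout j / α) with hZdef
  have hZpos : 0 < Z := Finset.sum_pos (fun j _ => Real.exp_pos _)
    (Finset.univ_nonempty_iff.mpr (Fin.pos_iff_nonempty.mp hk))
  have hPsum : ∑ i, Ppriv i = 1 := by
    rw [hPpriv]
    rw [← Finset.sum_div]
    exact div_self hZpos.ne'
  -- KKT identity: α * H Ppriv = ∑ i, qout i * Ppriv i - α * log Z
  have hKKT : α * H Ppriv = (∑ i, qout i * Ppriv i) - α * Real.log Z := by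
    have hHval : H Ppriv = (∑ i, qout i * Ppriv i) / α - Real.log Z := by
      rw [hH]
      have : ∀ i, Ppriv i * Real.log (Ppriv i)
          = (qout i * Ppriv i) / α - Real.log Z * Ppriv i := by
        intro i
        have hlog : Real.log (Ppriv i) = qout i / α - Real.log Z := by
          rw [hPpriv]
          simp only
          rw [Real.log_div (Real.exp_pos _).ne' hZpos.ne', Real.log_exp]
        rw [hlog]
        ring
      simp only [this]
      rw [Finset.sum_sub_distrib, ← Finset.sum_div, ← Finset.mul_sum, hPsum]
      ring
    rw [hHval]
    field_simp
  -- sSup of first image is attained at qtilde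
  have hS1 : sSup ((fun q => ∑ i, q i * (P i - Ppriv i)) '' convexHull ℝ Q)
      = ∑ i, qtilde i * (P i - Ppriv i) := by
    apply IsGreatest.csSup_eq
    constructor
    · exact Set.mem_image_of_mem _ hqt
    · rintro x ⟨q, hq, rfl⟩
      exact hqtmax q hq
  have hgap : φα Ppriv - ψα qout = ∑ i, (qtilde i - qout i) * (P i - Ppriv i) := by
    rw [hφα, hψα]
    simp only
    rw [hS1, ← hZdef]
    have : ∑ i, (qtilde i - qout i) * (P i - Ppriv i)
        = (∑ i, qtilde i * (P i - Ppriv i)) - (∑ i, qout i * P i)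
          + (∑ i, qout i * Ppriv i) := by
      rw [← Finset.sum_sub_distrib, ← Finset.sum_add_distrib]
      apply Finset.sum_congr rfl
      intro i _
      ring
    rw [this, hKKT]
    ring
  refine ⟨hgap, ?_⟩
  rw [hgap]
  apply le_csSup
  · have hhull : ∀ q ∈ convexHull ℝ Q, ∀ i, |q i| ≤ 1 := by
      have hsub : convexHull ℝ Q ⊆ Set.pi Set.univ fun _ => Set.Icc (-1:ℝ) 1 := by
        apply convexHull_min
        · intro q hq i _
          exact abs_le.mp (hQbdd q hq i)
        · exact convex_pi fun i _ => convex_Icc _ _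
      intro q hq i
      exact abs_le.mpr (hsub hq i (Set.mem_univ i))
    refine ⟨∑ i, (1 + |qout i|) * |P i - Ppriv i|, ?_⟩
    rintro x ⟨q, hq, rfl⟩
    apply Finset.sum_le_sum
    intro i _
    calc (q i - qout i) * (P i - Ppriv i) ≤ |(q i - qout i) * (P i - Ppriv i)| := le_abs_self _
      _ = |q i - qout i| * |P i - Ppriv i| := abs_mul _ _
      _ ≤ (1 + |qout i|) * |P i - Ppriv i| := by
          apply mul_le_mul_of_nonneg_right _ (abs_nonneg _)
          calc |q i - qout i| ≤ |q i| + |qout i| := abs_sub _ _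
            _ ≤ 1 + |qout i| := by linarith [hhull q hq i]
  · exact Set.mem_image_of_mem _ hqt
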